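/- (Bauer–Namioka extension, finite-dimensional case.) Let E = ℝⁿ with a norm, C ⊆ E a convex cone, F ⊆ E a subspace, and Θ a linear functional on F. If there exists a neighborhood U of 0 such that Θ(F ∩ (U + C)) is bounded from below, then Θ admits a continuous linear extension to E which is nonnegative on C. -/

import Mathlib

open scoped Pointwise
open Metric

private lemma le_infDist_aux {E : Type*} [NormedAddCommGroup E] {s : Set E} {x : E} {b : ℝ}
    (hs : s.Nonempty) (h : ∀ y ∈ s, b ≤ dist x y) : b ≤ infDist x s := by
  by_contra hb
  push_neg at hb
  obtain ⟨y, hy, hd⟩ := (Metric.infDist_lt_iff hs).1 hb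
  exact absurd (h y hy) (not_le.2 hd)

private lemma infDist_smul_cone {E : Type*} [NormedAddCommGroup E] [NormedSpace ℝ E]
    (C : ConvexCone ℝ E) (hne : (C : Set E).Nonempty) {t : ℝ} (ht : 0 < t) (x : E) :
    infDist (t • x) (C : Set E) = t * infDist x (C : Set E) := by
  have key : ∀ s : ℝ, 0 < s → ∀ y : E,
      infDist (s • y) (C : Set E) ≤ s * infDist y (C : Set E) := by
    intro s hs y
    have : ∀ c ∈ (C : Set E), infDist (s • y) (C : Set E) ≤ s * dist y c := by
      intro c hc
      have hsc : s • c ∈ (C : Set E) := C.smul_mem hs hc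
      calc infDist (s • y) (C : Set E) ≤ dist (s • y) (s • c) :=
            infDist_le_dist_of_mem hsc
        _ = s * dist y c := by
            rw [dist_smul₀, Real.norm_eq_abs, abs_of_pos hs]
    have h2 : infDist (s • y) (C : Set E) / s ≤ infDist y (C : Set E) := by
      apply le_infDist_aux hne
      intro c hc
      rw [div_le_iff₀' hs]
      exact this c hc
    linarith [(div_le_iff₀' hs).1 h2]
  refine le_antisymm (key t ht x) ?_
  have := key t⁻¹ (inv_pos.2 ht) (t • x)
  rw [inv_smul_smul₀ ht.ne' x] at this
  calc t * infDist x (C : Set E) ≤ t * (t⁻¹ * infDist (t • x) (C : Set E)) := by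
        exact mul_le_mul_of_nonneg_left this ht.le
    _ = infDist (t • x) (C : Set E) := by field_simp

theorem stmt16 {E : Type*} [NormedAddCommGroup E] [NormedSpace ℝ E] [FiniteDimensional ℝ E]
    (C : ConvexCone ℝ E) (F : Subspace ℝ E) (Θ : F →ₗ[ℝ] ℝ)
    (hbdd : ∃ U ∈ nhds (0 : E),
      BddBelow {r : ℝ | ∃ x : F, (x : E) ∈ U + (C : Set E) ∧ Θ x = r}) :
    ∃ Θ' : E →L[ℝ] ℝ, (∀ x : F, Θ' x = Θ x) ∧ ∀ x ∈ C, 0 ≤ Θ' x := by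
  rcases (C : Set E).eq_empty_or_nonempty with hC | hne
  · -- empty cone: any linear extension works, continuity is automatic
    obtain ⟨g, hg⟩ := LinearMap.exists_extend Θ
    refine ⟨LinearMap.toContinuousLinearMap g, ?_, ?_⟩
    · intro x
      have := congrFun (congrArg (fun f => f.toFun) hg) x
      simpa using this
    · intro x hx
      exact absurd hx (by simp [← SetLike.mem_coe, hC])
  · obtain ⟨U, hU, m, hm⟩ := hbdd
    obtain ⟨ε, hε, hball⟩ := Metric.mem_nhds_iff.1 hU
    set M : ℝ := max 0 (-m) with hM
    have hM0 : 0 ≤ M := le_max_left _ _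
    have hmem : ∀ x : F, (x : E) ∈ U + (C : Set E) → -M ≤ Θ x := by
      intro x hx
      have h1 : m ≤ Θ x := hm ⟨x, hx, rfl⟩
      have h2 : -M ≤ m := by rw [hM]; linarith [le_max_right (0 : ℝ) (-m)]
      linarith
    set K : ℝ := 2 * M / ε + 1 with hK
    have hK0 : 0 < K := by positivity
    -- key inequality
    have key : ∀ g : F, ∀ c ∈ (C : Set E), Θ g ≤ K * ‖(g : E) + c‖ := by
      intro g c hc
      rcases eq_or_lt_of_le (norm_nonneg ((g : E) + c)) with hr | hr
      · -- ‖g + c‖ = 0, so -g = c ∈ C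
        have hgc : (g : E) + c = 0 := by
          rw [← norm_eq_zero]; exact hr.symm
        have hc' : c = -(g : E) := eq_neg_of_add_eq_zero_right hgc
        have hneg : ∀ t : ℝ, 0 < t → Θ g ≤ M / t := by
          intro t ht
          have hdecomp : ((-(t • g) : F) : E) = 0 + t • c := by
            push_cast
            rw [hc']
            module
          have hmem' : ((-(t • g) : F) : E) ∈ U + (C : Set E) := by
            rw [hdecomp]
            exact Set.add_mem_add (hball (mem_ball_self hε)) (C.smul_mem ht hc)
          have hb := hmem _ hmem'
          have hT : Θ (-(t • g)) = -(t * Θ g) := by simp [mul_comm]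
          rw [hT] at hb
          rw [le_div_iff₀ ht]
          linarith [mul_comm t (Θ g)]
        rw [← hr, mul_zero]
        by_contra hpos
        push_neg at hpos
        have ht : (0 : ℝ) < (M + 1) / Θ g := by positivity
        have h := hneg _ ht
        rw [le_div_iff₀ ht] at h
        have heq : Θ g * ((M + 1) / Θ g) = M + 1 := by field_simp
        linarith
      · -- ‖g + c‖ > 0
        set r := ‖(g : E) + c‖ with hrdef
        set t : ℝ := ε / (2 * r) with htdef
        have ht : 0 < t := by positivity
        have hmem' : ((-(t • g) : F) : E) ∈ U + (C : Set E) := by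
          have hdecomp : ((-(t • g) : F) : E) = (-(t • ((g : E) + c))) + t • c := by
            push_cast
            module
          rw [hdecomp]
          refine Set.add_mem_add (hball ?_) (C.smul_mem ht hc)
          rw [mem_ball_zero_iff, norm_neg, norm_smul, Real.norm_eq_abs, abs_of_pos ht]
          rw [htdef]
          rw [div_mul_eq_mul_div, div_lt_iff₀ (by positivity)]
          calc ε * r < ε * (2 * r) := by nlinarith
            _ = ε * (2 * r) := rfl
        have := hmem _ hmem'
        have hΘ : Θ (-(t • g)) = -(t * Θ g) := by simp [mul_comm]
        rw [hΘ] at this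
        have h1 : t * Θ g ≤ M := by linarith
        have h2 : Θ g ≤ M / t := by
          rw [le_div_iff₀ ht]; linarith [mul_comm t (Θ g)]
        calc Θ g ≤ M / t := h2
          _ = 2 * M * r / ε := by rw [htdef]; field_simp
          _ = (2 * M / ε) * r := by ring
          _ ≤ K * r := by rw [hK]; nlinarith
    -- sublinear functional
    set N : E → ℝ := fun x => K * infDist (-x) (C : Set E) with hN
    have N_hom : ∀ c : ℝ, 0 < c → ∀ x, N (c • x) = c * N x := by
      intro c hc x
      simp only [hN]
      rw [← smul_neg, infDist_smul_cone C hne hc]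
      ring
    have N_add : ∀ x y, N (x + y) ≤ N x + N y := by
      intro x y
      simp only [hN]
      have h1 : ∀ a ∈ (C : Set E), ∀ b ∈ (C : Set E),
          infDist (-(x + y)) (C : Set E) ≤ dist (-x) a + dist (-y) b := by
        intro a ha b hb
        calc infDist (-(x + y)) (C : Set E) ≤ dist (-(x + y)) (a + b) :=
              infDist_le_dist_of_mem (C.add_mem ha hb)
          _ ≤ dist (-x) a + dist (-y) b := by
              simp only [dist_eq_norm]
              calc ‖-(x + y) - (a + b)‖ = ‖(-x - a) + (-y - b)‖ := by abel_nf
                _ ≤ ‖-x - a‖ + ‖-y - b‖ := norm_add_le _ _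
      have h2 : ∀ a ∈ (C : Set E),
          infDist (-(x + y)) (C : Set E) - infDist (-y) (C : Set E) ≤ dist (-x) a := by
        intro a ha
        have := le_infDist_aux hne (x := -y)
          (b := infDist (-(x + y)) (C : Set E) - dist (-x) a)
          (fun b hb => by linarith [h1 a ha b hb])
        linarith
      have h3 : infDist (-(x + y)) (C : Set E) - infDist (-y) (C : Set E)
          ≤ infDist (-x) (C : Set E) := le_infDist_aux hne h2
      nlinarith [h3, hK0.le]
    have hf : ∀ x : (⟨F, Θ⟩ : E →ₗ.[ℝ] ℝ).domain,
        (⟨F, Θ⟩ : E →ₗ.[ℝ] ℝ) x ≤ N x := by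
      intro x
      show Θ x ≤ K * infDist (-(x : E)) (C : Set E)
      have hd : Θ x / K ≤ infDist (-(x : E)) (C : Set E) := by
        apply le_infDist_aux hne
        intro c hc
        rw [div_le_iff₀ hK0, dist_eq_norm]
        have : -(x : E) - c = -((x : E) + c) := by abel
        rw [this, norm_neg]
        linarith [key x c hc, mul_comm K ‖(x : E) + c‖]
      calc Θ x = (Θ x / K) * K := by field_simp
        _ ≤ infDist (-(x : E)) (C : Set E) * K := by
            exact mul_le_mul_of_nonneg_right hd hK0.le
        _ = K * infDist (-(x : E)) (C : Set E) := mul_comm _ _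
    obtain ⟨g, hg, hgle⟩ := exists_extension_of_le_sublinear ⟨F, Θ⟩ N N_hom N_add hf
    refine ⟨LinearMap.toContinuousLinearMap g, ?_, ?_⟩
    · intro x
      exact hg x
    · intro x hx
      have h := hgle (-x)
      have hNx : N (-x) = 0 := by
        simp only [hN, neg_neg]
        rw [infDist_zero_of_mem hx, mul_zero]
      rw [hNx, map_neg] at h
      simpa using neg_nonpos.1 h
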